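/- Let V be an N×N real positive definite matrix. Then the set function f(x) = log det(V_x) on subsets x of {1,…,N} (with f(∅) = 0) is submodular: for all subsets x ⊆ y ⊆ {1,…,N} and every index i ∈ {1,…,N} with i ∉ y, one has f(x ∪ {i}) − f(x) ≥ f(y ∪ {i}) − f(y). -/

import Mathlib

open Matrix BigOperators

/-- The determinant of the principal submatrix of `V` indexed by the subset `x`
(with the convention `det(V_∅) = 1`, which holds automatically for the empty matrix). -/
noncomputable def principalSubdet {N : ℕ} (V : Matrix (Fin N) (Fin N) ℝ)
    (x : Finset (Fin N)) : ℝ :=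
  (V.submatrix (fun i : x => (i : Fin N)) (fun i : x => (i : Fin N))).det

namespace LogdetAux

set_option linter.unusedSectionVars false

variable {N : ℕ} {m : Type*} [Fintype m] [DecidableEq m]

/-- extension of a vector along a map, by zero -/
noncomputable def extVec (f : m → Fin N) (v : m → ℝ) : Fin N → ℝ :=
  fun a => ∑ k, if f k = a then v k else 0

lemma extVec_apply {f : m → Fin N} (hf : Function.Injective f) (v : m → ℝ) (k : m) :
    extVec f v (f k) = v k := by
  unfold extVec
  rw [Finset.sum_eq_single k]
  · simp
  · intro l _ hlk; exact if_neg (fun h => hlk (hf h))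
  · intro h; exact absurd (Finset.mem_univ k) h

lemma extVec_eq_zero {f : m → Fin N} (v : m → ℝ) {a : Fin N} (ha : ∀ k, f k ≠ a) :
    extVec f v a = 0 :=
  Finset.sum_eq_zero fun k _ => if_neg (ha k)

lemma extVec_support {f : m → Fin N} {v : m → ℝ} {a : Fin N} (h : extVec f v a ≠ 0) :
    ∃ k, f k = a := by
  by_contra hc; push_neg at hc; exact h (extVec_eq_zero v hc)

lemma extVec_ne_zero {f : m → Fin N} (hf : Function.Injective f) {v : m → ℝ} (hv : v ≠ 0) :
    extVec f v ≠ 0 := by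
  obtain ⟨k, hk⟩ := Function.ne_iff.mp hv
  intro h
  apply hk
  have : extVec f v (f k) = 0 := by rw [h]; rfl
  rwa [extVec_apply hf v k] at this

lemma extVec_comp {f : m → Fin N} (hf : Function.Injective f) {u : Fin N → ℝ}
    (hu : ∀ a, u a ≠ 0 → ∃ k, f k = a) : extVec f (u ∘ f) = u := by
  funext a
  by_cases h : ∃ k, f k = a
  · obtain ⟨k, rfl⟩ := h
    exact extVec_apply hf _ k
  · push_neg at h
    rw [extVec_eq_zero _ h]
    rcases eq_or_ne (u a) 0 with h0 | h0
    · rw [h0]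
    · exact absurd (hu a h0) (by push_neg; exact h)

lemma mulVec_extVec (V : Matrix (Fin N) (Fin N) ℝ) (f : m → Fin N) (v : m → ℝ) (a : Fin N) :
    (V *ᵥ extVec f v) a = ∑ l, V a (f l) * v l := by
  simp only [mulVec, dotProduct, extVec, Finset.mul_sum]
  rw [Finset.sum_comm]
  refine Finset.sum_congr rfl fun l _ => ?_
  simp [mul_ite, mul_zero, Finset.sum_ite_eq]

lemma extVec_dot (V : Matrix (Fin N) (Fin N) ℝ) (f : m → Fin N) (v w : m → ℝ) :
    extVec f v ⬝ᵥ (V *ᵥ extVec f w) = v ⬝ᵥ ((V.submatrix f f) *ᵥ w) := by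
  simp only [dotProduct]
  have : ∀ a, extVec f v a * (V *ᵥ extVec f w) a
      = ∑ k, if f k = a then v k * (V *ᵥ extVec f w) a else 0 := by
    intro a
    simp only [extVec, Finset.sum_mul, ite_mul, zero_mul]
  simp only [this]
  rw [Finset.sum_comm]
  refine Finset.sum_congr rfl fun k _ => ?_
  rw [Finset.sum_ite_eq (Finset.univ) (f k)]
  rw [if_pos (Finset.mem_univ _), mulVec_extVec]
  simp [mulVec, dotProduct, submatrix_apply]

lemma posDef_submatrix {V : Matrix (Fin N) (Fin N) ℝ} (hV : V.PosDef) {f : m → Fin N}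
    (hf : Function.Injective f) : (V.submatrix f f).PosDef := by
  refine PosDef.of_dotProduct_mulVec_pos (hV.isHermitian.submatrix f) fun v hv => ?_
  have h := hV.dotProduct_mulVec_pos (extVec_ne_zero hf hv)
  rwa [star_trivial, extVec_dot V f v v] at h

end LogdetAux

open LogdetAux in
lemma logdet_key {N : ℕ} {V : Matrix (Fin N) (Fin N) ℝ} (hV : V.PosDef)
    (z : Finset (Fin N)) {i : Fin N} (hi : i ∉ z) :
    ∃ u : Fin N → ℝ, u i = 1 ∧ (∀ a, u a ≠ 0 → a ∈ insert i z) ∧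
      principalSubdet V (insert i z) = (u ⬝ᵥ V *ᵥ u) * principalSubdet V z ∧
      ∀ u' : Fin N → ℝ, u' i = 1 → (∀ a, u' a ≠ 0 → a ∈ insert i z) →
        u ⬝ᵥ V *ᵥ u ≤ u' ⬝ᵥ V *ᵥ u' := by
  classical
  set f : ({a // a ∈ z} ⊕ Unit) → Fin N := Sum.elim Subtype.val (fun _ => i) with hf_def
  have hf : Function.Injective f := by
    rintro (⟨a, ha⟩ | ⟨⟩) (⟨c, hc⟩ | ⟨⟩) h
    · simp only [hf_def, Sum.elim_inl] at h
      simpa using h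
    · simp only [hf_def, Sum.elim_inl, Sum.elim_inr] at h
      cases h; exact absurd ha hi
    · simp only [hf_def, Sum.elim_inl, Sum.elim_inr] at h
      cases h; exact absurd hc hi
    · rfl
  set A : Matrix {a // a ∈ z} {a // a ∈ z} ℝ :=
    V.submatrix (fun j : z => (j : Fin N)) (fun j : z => (j : Fin N)) with hA_def
  have hA : A.PosDef := posDef_submatrix hV Subtype.val_injective
  set b : {a // a ∈ z} → ℝ := fun j => V (j : Fin N) i with hb_def
  set p : {a // a ∈ z} → ℝ := A⁻¹ *ᵥ b with hp_def
  set s : ℝ := V i i - b ⬝ᵥ p with hs_def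
  set M : Matrix _ _ ℝ := V.submatrix f f with hM_def
  have hPz : principalSubdet V z = A.det := rfl
  have hsymm : ∀ a c : Fin N, V a c = V c a := by
    intro a c
    calc V a c = Vᴴ a c := by rw [hV.isHermitian]
    _ = V c a := by simp [conjTranspose_apply]
  have hMblocks : M = fromBlocks A (Matrix.of fun j (_ : Unit) => b j)
      (Matrix.of fun (_ : Unit) j => b j) (Matrix.of fun _ _ => V i i) := by
    ext (j | ⟨⟩) (k | ⟨⟩)
    · rfl
    · rfl
    · exact hsymm i k
    · rfl
  haveI : Invertible A := invertibleOfIsUnitDet A hA.det_pos.ne'.isUnit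
  have hAinv : A * A⁻¹ = 1 := mul_nonsing_inv A hA.det_pos.ne'.isUnit
  have hdet : M.det = A.det * s := by
    rw [hMblocks, det_fromBlocks₁₁]
    congr 1
    rw [det_unique]
    simp only [Matrix.sub_apply, of_apply, invOf_eq_nonsing_inv, hs_def]
    congr 1
    rw [hp_def]
    simp only [mul_apply, mulVec, dotProduct, of_apply, Finset.sum_mul, Finset.mul_sum]
    rw [Finset.sum_comm]
    exact Finset.sum_congr rfl fun k _ => Finset.sum_congr rfl fun l _ => by ring
  have hPdet : principalSubdet V (insert i z) = M.det := by
    let e : {a // a ∈ insert i z} ≃ ({a // a ∈ z} ⊕ Unit) :=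
      { toFun := fun j => if h : (j : Fin N) ∈ z then Sum.inl ⟨j, h⟩ else Sum.inr ()
        invFun := Sum.elim (fun j => ⟨j, Finset.mem_insert_of_mem j.2⟩)
          (fun _ => ⟨i, Finset.mem_insert_self i z⟩)
        left_inv := by
          rintro ⟨a, ha⟩
          dsimp only
          by_cases h : a ∈ z
          · rw [dif_pos h]
            rfl
          · rw [dif_neg h]
            apply Subtype.ext
            show i = a
            rcases Finset.mem_insert.mp ha with h' | h'
            · exact h'.symm
            · exact absurd h' h
        right_inv := by
          rintro (j | ⟨⟩)
          · simp only [Sum.elim_inl]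
            simp [j.2]
          · simp only [Sum.elim_inr]
            simp [hi] }
    have hfe : ∀ j : {a // a ∈ insert i z}, f (e j) = (j : Fin N) := by
      rintro ⟨a, ha⟩
      show f (if h : a ∈ z then Sum.inl ⟨a, h⟩ else Sum.inr ()) = a
      by_cases h : a ∈ z
      · rw [dif_pos h]
        simp [hf_def]
      · rw [dif_neg h]
        have hai : a = i := by
          rcases Finset.mem_insert.mp ha with h' | h'
          · exact h'
          · exact absurd h' h
        simp [hf_def, hai]
    have h1 : principalSubdet V (insert i z) = (M.submatrix e e).det := by
      unfold principalSubdet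
      congr 1
      ext j k
      simp [hM_def, submatrix_apply, hfe]
    rw [h1, det_submatrix_equiv_self]
  have hAsymm : Aᵀ = A := by
    rw [← conjTranspose_eq_transpose_of_trivial, hA.isHermitian]
  have hAp : A *ᵥ p = b := by
    rw [hp_def, mulVec_mulVec, hAinv, one_mulVec]
  have hquad : ∀ w : {a // a ∈ z} → ℝ,
      (Sum.elim w (fun _ : Unit => (1:ℝ))) ⬝ᵥ (M *ᵥ Sum.elim w (fun _ => 1))
        = s + ((w + p) ⬝ᵥ (A *ᵥ (w + p))) := by
    intro w
    rw [hMblocks, fromBlocks_mulVec, sumElim_dotProduct_sumElim]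
    simp only [Sum.elim_comp_inl, Sum.elim_comp_inr]
    have hB : (Matrix.of fun j (_ : Unit) => b j) *ᵥ (fun _ => (1:ℝ)) = b := by
      funext j; simp [mulVec, dotProduct]
    have hC : (Matrix.of fun (_ : Unit) j => b j) *ᵥ w = fun _ => b ⬝ᵥ w := by
      funext u; simp [mulVec, dotProduct]
    have hD : (Matrix.of fun (_ : Unit) (_ : Unit) => V i i) *ᵥ (fun _ => (1:ℝ))
        = fun _ => V i i := by
      funext u; simp [mulVec, dotProduct]
    rw [hB, hC, hD]
    have h1 : (fun _ : Unit => (1:ℝ)) ⬝ᵥ ((fun _ : Unit => b ⬝ᵥ w) + fun _ => V i i)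
        = b ⬝ᵥ w + V i i := by
      simp [dotProduct]
    rw [h1]
    have hpAw : p ⬝ᵥ (A *ᵥ w) = b ⬝ᵥ w := by
      rw [dotProduct_mulVec]
      congr 1
      calc p ᵥ* A = p ᵥ* Aᵀᵀ := by rw [transpose_transpose]
      _ = Aᵀ *ᵥ p := vecMul_transpose Aᵀ p
      _ = A *ᵥ p := by rw [hAsymm]
      _ = b := hAp
    have expand : (w + p) ⬝ᵥ (A *ᵥ (w + p))
        = w ⬝ᵥ (A *ᵥ w) + w ⬝ᵥ b + (b ⬝ᵥ w + b ⬝ᵥ p) := by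
      rw [mulVec_add, hAp, add_dotProduct, dotProduct_add, dotProduct_add, hpAw,
        dotProduct_comm p b]
    rw [expand, dotProduct_add, hs_def]
    ring
  set u : Fin N → ℝ := extVec f (Sum.elim (-p) (fun _ => 1)) with hu_def
  have hQu : u ⬝ᵥ (V *ᵥ u) = s := by
    rw [hu_def, extVec_dot, ← hM_def, hquad (-p)]
    simp
  have hui : u i = 1 := by
    have h := extVec_apply hf (Sum.elim (-p) (fun _ => (1:ℝ))) (Sum.inr ())
    simpa [hf_def] using h
  refine ⟨u, hui, ?_, ?_, ?_⟩
  · intro a ha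
    obtain ⟨k, rfl⟩ := extVec_support ha
    rcases k with j | ⟨⟩
    · exact Finset.mem_insert_of_mem j.2
    · exact Finset.mem_insert_self i z
  · rw [hQu, hPdet, hdet, hPz]; ring
  · intro u' h1 h2
    have hsupp : ∀ a, u' a ≠ 0 → ∃ k, f k = a := by
      intro a ha
      rcases Finset.mem_insert.mp (h2 a ha) with h | h
      · exact ⟨Sum.inr (), h.symm⟩
      · exact ⟨Sum.inl ⟨a, h⟩, rfl⟩
    have hu'' : extVec f (u' ∘ f) = u' := extVec_comp hf hsupp
    have hQ' : u' ⬝ᵥ (V *ᵥ u') = (u' ∘ f) ⬝ᵥ (M *ᵥ (u' ∘ f)) := by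
      conv_lhs => rw [← hu'']
      rw [extVec_dot, ← hM_def]
    have hcomp : u' ∘ f = Sum.elim (fun j : {a // a ∈ z} => u' j) (fun _ => 1) := by
      funext k
      rcases k with j | ⟨⟩
      · rfl
      · simpa [hf_def] using h1
    have hnn : 0 ≤ ((fun j : {a // a ∈ z} => u' j) + p) ⬝ᵥ
        (A *ᵥ ((fun j : {a // a ∈ z} => u' j) + p)) := by
      have h := hA.posSemidef.dotProduct_mulVec_nonneg ((fun j : {a // a ∈ z} => u' j) + p)
      rwa [star_trivial] at h
    rw [hQu, hQ', hcomp, hquad]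
    linarith

theorem logdet_submodular (N : ℕ) (V : Matrix (Fin N) (Fin N) ℝ) (hV : V.PosDef)
    (x y : Finset (Fin N)) (hxy : x ⊆ y) (i : Fin N) (hi : i ∉ y) :
    Real.log (principalSubdet V (insert i x)) - Real.log (principalSubdet V x) ≥
      Real.log (principalSubdet V (insert i y)) - Real.log (principalSubdet V y) := by
  classical
  have hix : i ∉ x := fun h => hi (hxy h)
  obtain ⟨u, hui, hus, heq, _⟩ := logdet_key hV x hix
  obtain ⟨u', hui', hus', heq', hmin'⟩ := logdet_key hV y hi
  have hPx : 0 < principalSubdet V x :=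
    (LogdetAux.posDef_submatrix hV Subtype.val_injective).det_pos
  have hPy : 0 < principalSubdet V y :=
    (LogdetAux.posDef_submatrix hV Subtype.val_injective).det_pos
  have hPix : 0 < principalSubdet V (insert i x) :=
    (LogdetAux.posDef_submatrix hV Subtype.val_injective).det_pos
  have hPiy : 0 < principalSubdet V (insert i y) :=
    (LogdetAux.posDef_submatrix hV Subtype.val_injective).det_pos
  have hQx : 0 < u ⬝ᵥ V *ᵥ u := by
    by_contra h
    push_neg at h
    nlinarith
  have hQy : 0 < u' ⬝ᵥ V *ᵥ u' := by
    by_contra h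
    push_neg at h
    nlinarith
  have hle : u' ⬝ᵥ V *ᵥ u' ≤ u ⬝ᵥ V *ᵥ u := by
    apply hmin' u hui
    intro a ha
    exact Finset.insert_subset_insert i hxy (hus a ha)
  have hlx : Real.log (principalSubdet V (insert i x))
      = Real.log (u ⬝ᵥ V *ᵥ u) + Real.log (principalSubdet V x) := by
    rw [heq, Real.log_mul hQx.ne' hPx.ne']
  have hly : Real.log (principalSubdet V (insert i y))
      = Real.log (u' ⬝ᵥ V *ᵥ u') + Real.log (principalSubdet V y) := by
    rw [heq', Real.log_mul hQy.ne' hPy.ne']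
  have hlog : Real.log (u' ⬝ᵥ V *ᵥ u') ≤ Real.log (u ⬝ᵥ V *ᵥ u) :=
    Real.log_le_log hQy hle
  rw [hlx, hly]
  linarith
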